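/- Let (X,d) be a complete metric space on which the group of similarities acts transitively: for all x, y ∈ X there exist a surjection f : X → X and a real σ > 0 with d(f(a), f(b)) = σ·d(a,b) for all a, b ∈ X and f(x) = y. Then the isometry group acts transitively: for all x, y ∈ X there exists a surjection g : X → X with d(g(a), g(b)) = d(a,b) for all a, b ∈ X and g(x) = y. -/

import Mathlib

/-- Inverse of a similarity is a similarity with the inverse coefficient. -/
lemma sim_inv_aux {X : Type*} [MetricSpace X] (f : X → X) (σ : ℝ)
    (hs : Function.Surjective f) (hσ : 0 < σ)
    (hd : ∀ a b : X, dist (f a) (f b) = σ * dist a b) :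
    ∃ g : X → X, Function.Surjective g ∧
      (∀ a b : X, dist (g a) (g b) = σ⁻¹ * dist a b) ∧
      (∀ a, f (g a) = a) ∧ (∀ a, g (f a) = a) := by
  have hinj : Function.Injective f := by
    intro a b hab
    have h := hd a b
    rw [hab, dist_self] at h
    have : dist a b = 0 := by
      have := h.symm
      nlinarith [dist_nonneg (x := a) (y := b)]
    exact dist_eq_zero.mp this
  let e := Equiv.ofBijective f ⟨hinj, hs⟩
  refine ⟨e.symm, e.symm.surjective, ?_, ?_, ?_⟩
  · intro a b
    have h := hd (e.symm a) (e.symm b)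
    have ha : f (e.symm a) = a := e.apply_symm_apply a
    have hb : f (e.symm b) = b := e.apply_symm_apply b
    rw [ha, hb] at h
    field_simp [h]
    rw [h]; ring
  · intro a; exact e.apply_symm_apply a
  · intro a; exact e.symm_apply_apply a

/-- A contraction-similarity on a complete nonempty metric space has a fixed point. -/
lemma sim_fixed_aux {X : Type*} [MetricSpace X] [CompleteSpace X] [Nonempty X]
    (f : X → X) (σ : ℝ) (hσ0 : 0 ≤ σ) (hσ1 : σ < 1)
    (hd : ∀ a b : X, dist (f a) (f b) = σ * dist a b) :
    ∃ z, f z = z := by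
  have hc : ContractingWith ⟨σ, hσ0⟩ f := by
    constructor
    · exact_mod_cast hσ1
    · exact LipschitzWith.of_dist_le_mul fun a b => le_of_eq (hd a b)
  exact ⟨hc.fixedPoint f, hc.fixedPoint_isFixedPt⟩

/-- If the group of all similarities acts transitively on a complete metric space, then
the group of isometries also acts transitively on it. -/
theorem isometry_transitive_of_similarity_transitive {X : Type*} [MetricSpace X]
    [CompleteSpace X]
    (htrans : ∀ x y : X, ∃ (f : X → X) (σ : ℝ), Function.Surjective f ∧ 0 < σ ∧
      (∀ a b : X, dist (f a) (f b) = σ * dist a b) ∧ f x = y) :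
    ∀ x y : X, ∃ g : X → X, Function.Surjective g ∧
      (∀ a b : X, dist (g a) (g b) = dist a b) ∧ g x = y := by
  intro x y
  obtain ⟨f, σ, hfs, hσ, hfd, hfx⟩ := htrans x y
  have : Nonempty X := ⟨x⟩
  by_cases hσ1 : σ = 1
  · exact ⟨f, hfs, by simpa [hσ1] using hfd, hfx⟩
  -- inverse of f
  obtain ⟨f', hf's, hf'd, hff', hf'f⟩ := sim_inv_aux f σ hfs hσ hfd
  -- fixed point z of f (and hence of f')
  have hz : ∃ z, f z = z := by
    rcases lt_or_gt_of_ne hσ1 with h | h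
    · exact sim_fixed_aux f σ hσ.le h hfd
    · obtain ⟨z, hz⟩ := sim_fixed_aux f' σ⁻¹ (by positivity)
        (by rw [inv_lt_one_iff₀]; right; exact h) hf'd
      exact ⟨z, by conv_lhs => rw [← hz, hff']⟩
  obtain ⟨z, hz⟩ := hz
  have hz' : f' z = z := by conv_lhs => rw [← hz, hf'f]
  -- similarity u : z → x and its inverse
  obtain ⟨u, α, hus, hα, hud, huz⟩ := htrans z x
  obtain ⟨u', hu's, hu'd, huu', hu'u⟩ := sim_inv_aux u α hus hα hud
  -- g = f ∘ u ∘ f' ∘ u'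
  refine ⟨f ∘ u ∘ f' ∘ u', ?_, ?_, ?_⟩
  · exact hfs.comp (hus.comp (hf's.comp hu's))
  · intro a b
    simp only [Function.comp_apply, hfd, hud, hf'd, hu'd]
    field_simp
  · have hu'x : u' x = z := by rw [← huz, hu'u]
    simp [Function.comp_apply, hu'x, hz', huz, hfx]
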